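/- Let G be a connected graph with at least three vertices and let u, v, w be three distinct vertices of G. Then u, v, w have at least one median if and only if the set S = {u,v,w} satisfies 2·d(S) = d(u,v) + d(u,w) + d(v,w). -/

import Mathlib

open Finset SimpleGraph Polynomial

/-- The Steiner distance of a vertex set `S`: the minimum number of edges of a
connected subgraph of `G` whose vertex set contains `S`. -/
noncomputable def steinerDist {V : Type*} (G : SimpleGraph V) (S : Set V) : ℕ :=
  sInf {n | ∃ H : G.Subgraph, H.Connected ∧ S ⊆ H.verts ∧ H.edgeSet.ncard = n}

/-- The Steiner `k`-Wiener index. -/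
noncomputable def SW {V : Type*} [Fintype V] [DecidableEq V] (k : ℕ) (G : SimpleGraph V) : ℕ :=
  ∑ S ∈ Finset.powersetCard k (Finset.univ : Finset V), steinerDist G (S : Set V)

/-- The Steiner `k`-hyper-Wiener index. -/
noncomputable def SWW {V : Type*} [Fintype V] [DecidableEq V] (k : ℕ) (G : SimpleGraph V) : ℝ :=
  (1/2) * ∑ S ∈ Finset.powersetCard k (Finset.univ : Finset V), (steinerDist G (S : Set V) : ℝ)
    + (1/2) * ∑ S ∈ Finset.powersetCard k (Finset.univ : Finset V), (steinerDist G (S : Set V) : ℝ) ^ 2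

/-- The Steiner `k`-Hosoya polynomial `∑_{m ≥ 0} d_k(G,m) x^m`, written as
`∑_{S ⊆ V(G), |S| = k} x^{d(S)}`. -/
noncomputable def SH {V : Type*} [Fintype V] [DecidableEq V] (k : ℕ) (G : SimpleGraph V) :
    Polynomial ℝ :=
  ∑ S ∈ Finset.powersetCard k (Finset.univ : Finset V), Polynomial.X ^ (steinerDist G (S : Set V))

/-- The Wiener index `W(G) = ∑_{{u,v} ⊆ V(G)} d(u,v)` (each unordered pair counted once). -/
noncomputable def wiener {V : Type*} [Fintype V] [DecidableEq V] (G : SimpleGraph V) : ℝ :=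
  (∑ p ∈ Finset.univ.offDiag, (G.dist p.1 p.2 : ℝ)) / 2

/-- `\overline{WW}(G) = ∑_{{u,v} ⊆ V(G)} d(u,v)²`. -/
noncomputable def WWbar {V : Type*} [Fintype V] [DecidableEq V] (G : SimpleGraph V) : ℝ :=
  (∑ p ∈ Finset.univ.offDiag, (G.dist p.1 p.2 : ℝ) ^ 2) / 2

/-- The set of ordered triples of pairwise distinct vertices. -/
def O3 (V : Type*) [Fintype V] [DecidableEq V] : Finset (V × V × V) :=
  Finset.univ.filter fun t => t.1 ≠ t.2.1 ∧ t.1 ≠ t.2.2 ∧ t.2.1 ≠ t.2.2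

/-- `\widehat{WW}(G) = ∑_{(u,v,w) ∈ O₃(G)} d(u,v)·d(u,w)`. -/
noncomputable def WWhat {V : Type*} [Fintype V] [DecidableEq V] (G : SimpleGraph V) : ℝ :=
  ∑ t ∈ O3 V, (G.dist t.1 t.2.1 : ℝ) * (G.dist t.1 t.2.2 : ℝ)

/-- `z` is a median of the triple `u, v, w`: it lies on a shortest `u,v`-path, a shortest
`u,w`-path and a shortest `v,w`-path. -/
def IsMedian {V : Type*} (G : SimpleGraph V) (u v w z : V) : Prop :=
  G.dist u z + G.dist z v = G.dist u v ∧
  G.dist u z + G.dist z w = G.dist u w ∧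
  G.dist v z + G.dist z w = G.dist v w

/-- A modular graph: a connected graph in which every triple of vertices has a median. -/
def IsModular {V : Type*} (G : SimpleGraph V) : Prop :=
  G.Connected ∧ ∀ u v w : V, ∃ z : V, IsMedian G u v w z

/-- The hypercube graph `Q_n` on `Fin n → Bool`: two vertices are adjacent iff they differ
in exactly one coordinate. -/
def hypercubeGraph (n : ℕ) : SimpleGraph (Fin n → Bool) :=
  SimpleGraph.fromRel fun x y => ∃! i, x i ≠ y i

/-- A partial cube: a connected graph isometrically embeddable into a hypercube. -/
def IsPartialCube {V : Type*} (G : SimpleGraph V) : Prop :=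
  G.Connected ∧ ∃ (n : ℕ) (f : V → (Fin n → Bool)),
    ∀ u v : V, (hypercubeGraph n).dist (f u) (f v) = G.dist u v

/-- The Djoković–Winkler relation Θ on (edges viewed as) unordered pairs:
`s(u₁,v₁) Θ s(u₂,v₂)` iff `d(u₁,u₂) + d(v₁,v₂) ≠ d(u₁,v₂) + d(v₁,u₂)`. -/
def theta {V : Type*} (G : SimpleGraph V) (e f : Sym2 V) : Prop :=
  ∃ u₁ v₁ u₂ v₂ : V, e = s(u₁, v₁) ∧ f = s(u₂, v₂) ∧
    G.dist u₁ u₂ + G.dist v₁ v₂ ≠ G.dist u₁ v₂ + G.dist v₁ u₂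

/-- `E` together with the component data `U`, `U'` is the family of Θ-classes of the
partial cube `G`: each `E i` is a Θ-class of edges, the classes are pairwise distinct and
cover the edge set, and `U i`, `U' i` are (the vertex sets of) the two connected components
of `G - E i`. -/
def IsThetaClassSetup {V : Type*} (G : SimpleGraph V) (d : ℕ)
    (E : Fin d → Set (Sym2 V)) (U U' : Fin d → Set V) : Prop :=
  (∀ i, ∃ e ∈ G.edgeSet, E i = {f | f ∈ G.edgeSet ∧ theta G f e}) ∧
  Function.Injective E ∧
  G.edgeSet = ⋃ i, E i ∧
  ∀ i, ∃ c c' : (G.deleteEdges (E i)).ConnectedComponent, c ≠ c' ∧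
    U i = c.supp ∧ U' i = c'.supp ∧
    ∀ b : (G.deleteEdges (E i)).ConnectedComponent, b = c ∨ b = c'


section MedianAux

open SimpleGraph Walk

private lemma aux_dist_coe_le {V : Type*} (G : SimpleGraph V) (H : G.Subgraph)
    (hH : H.Connected) (a b : H.verts) : G.dist ↑a ↑b ≤ H.coe.dist a b := by
  obtain ⟨P, _, hlen⟩ := hH.coe.exists_path_of_dist a b
  calc G.dist ↑a ↑b ≤ (P.map H.hom).length := SimpleGraph.dist_le _
    _ = P.length := SimpleGraph.Walk.length_map _ _
    _ = H.coe.dist a b := hlen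

private lemma aux_ncard_coe {V : Type*} (G : SimpleGraph V) (H : G.Subgraph) :
    H.coe.edgeSet.ncard = H.edgeSet.ncard := by
  rw [← SimpleGraph.Subgraph.image_coe_edgeSet_coe]
  exact (Set.ncard_image_of_injective _ (Sym2.map.injective Subtype.val_injective)).symm

private lemma aux_exists_center {W : Type*} [Fintype W] (G' : SimpleGraph W)
    (hc : G'.Connected) (u v w : W) :
    ∃ p : W, G'.dist u p + G'.dist p v = G'.dist u v ∧
      G'.dist u v + G'.dist p w ≤ G'.edgeSet.ncard := by
  classical
  obtain ⟨P, hPpath, hPlen⟩ := hc.exists_path_of_dist u v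
  obtain ⟨p, hpmem', hpmin⟩ := Finset.exists_min_image P.support.toFinset
    (fun x => G'.dist x w) ⟨u, by simp [SimpleGraph.Walk.start_mem_support]⟩
  rw [List.mem_toFinset] at hpmem'
  have hpmin' : ∀ x ∈ P.support, G'.dist p w ≤ G'.dist x w := fun x hx =>
    hpmin x (List.mem_toFinset.mpr hx)
  have hsplit : (P.takeUntil p hpmem').length + (P.dropUntil p hpmem').length = P.length := by
    have := congrArg SimpleGraph.Walk.length (P.take_spec hpmem')
    rwa [SimpleGraph.Walk.length_append] at this
  have h1 : G'.dist u p ≤ (P.takeUntil p hpmem').length := SimpleGraph.dist_le _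
  have h2 : G'.dist p v ≤ (P.dropUntil p hpmem').length := SimpleGraph.dist_le _
  have htri : G'.dist u v ≤ G'.dist u p + G'.dist p v := hc.dist_triangle
  have heq : G'.dist u p + G'.dist p v = G'.dist u v := by omega
  obtain ⟨Q, hQpath, hQlen⟩ := hc.exists_path_of_dist p w
  have hkey : ∀ x, x ∈ Q.support → x ∈ P.support → x = p := by
    intro x hxQ hxP
    by_contra hne
    have h3 : (Q.takeUntil x hxQ).length + (Q.dropUntil x hxQ).length = Q.length := by
      have := congrArg SimpleGraph.Walk.length (Q.take_spec hxQ)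
      rwa [SimpleGraph.Walk.length_append] at this
    have h4 : G'.dist x w ≤ (Q.dropUntil x hxQ).length := SimpleGraph.dist_le _
    have h5 : (Q.takeUntil x hxQ).length ≠ 0 := by
      intro h0
      exact hne (SimpleGraph.Walk.eq_of_length_eq_zero h0).symm
    have h6 := hpmin' x hxP
    omega
  have hdisj : Disjoint P.edges.toFinset Q.edges.toFinset := by
    rw [Finset.disjoint_left]
    intro e heP heQ
    rw [List.mem_toFinset] at heP heQ
    induction e using Sym2.ind with
    | _ a b =>
      have ha : a ∈ Q.support := Q.fst_mem_support_of_mem_edges heQ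
      have hb : b ∈ Q.support := Q.snd_mem_support_of_mem_edges heQ
      have ha' : a ∈ P.support := P.fst_mem_support_of_mem_edges heP
      have hb' : b ∈ P.support := P.snd_mem_support_of_mem_edges heP
      have hab : a ≠ b := (Q.adj_of_mem_edges heQ).ne
      exact hab ((hkey a ha ha').trans (hkey b hb hb').symm)
  have hPcard : P.edges.toFinset.card = P.length := by
    rw [List.toFinset_card_of_nodup hPpath.isTrail.edges_nodup, SimpleGraph.Walk.length_edges]
  have hQcard : Q.edges.toFinset.card = Q.length := by
    rw [List.toFinset_card_of_nodup hQpath.isTrail.edges_nodup, SimpleGraph.Walk.length_edges]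
  refine ⟨p, heq, ?_⟩
  have hsub : ↑(P.edges.toFinset ∪ Q.edges.toFinset) ⊆ G'.edgeSet := by
    intro e he
    simp only [Finset.coe_union, Set.mem_union, Finset.mem_coe, List.mem_toFinset] at he
    exact he.elim (fun h => P.edges_subset_edgeSet h) (fun h => Q.edges_subset_edgeSet h)
  calc G'.dist u v + G'.dist p w = P.length + Q.length := by omega
    _ = (P.edges.toFinset ∪ Q.edges.toFinset).card := by
        rw [Finset.card_union_of_disjoint hdisj, hPcard, hQcard]
    _ = (↑(P.edges.toFinset ∪ Q.edges.toFinset) : Set (Sym2 W)).ncard :=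
        (Set.ncard_coe_finset _).symm
    _ ≤ G'.edgeSet.ncard := Set.ncard_le_ncard hsub (Set.toFinite _)

private lemma aux_steiner_le {V : Type*} [Fintype V] [DecidableEq V] (G : SimpleGraph V)
    (hG : G.Connected) (u v w z : V) :
    steinerDist G {u, v, w} ≤ G.dist z u + G.dist z v + G.dist z w := by
  classical
  obtain ⟨Pu, _, hu⟩ := hG.exists_path_of_dist z u
  obtain ⟨Pv, _, hv⟩ := hG.exists_path_of_dist z v
  obtain ⟨Pw, _, hw⟩ := hG.exists_path_of_dist z w
  set H : G.Subgraph := Pu.toSubgraph ⊔ (Pv.toSubgraph ⊔ Pw.toSubgraph) with hH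
  have hconn : H.Connected := by
    refine SimpleGraph.Subgraph.connected_sup Pu.toSubgraph_connected.preconnected
      (SimpleGraph.Subgraph.connected_sup (Pv.toSubgraph_connected).preconnected Pw.toSubgraph_connected.preconnected ⟨z, ?_, ?_⟩).preconnected ⟨z, ?_, ?_⟩
    · exact Pv.start_mem_verts_toSubgraph
    · exact Pw.start_mem_verts_toSubgraph
    · exact Pu.start_mem_verts_toSubgraph
    · exact Or.inl Pv.start_mem_verts_toSubgraph
  have hsubS : ({u, v, w} : Set V) ⊆ H.verts := by
    intro x hx
    simp only [Set.mem_insert_iff, Set.mem_singleton_iff] at hx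
    rcases hx with rfl | rfl | rfl
    · exact Or.inl Pu.end_mem_verts_toSubgraph
    · exact Or.inr (Or.inl Pv.end_mem_verts_toSubgraph)
    · exact Or.inr (Or.inr Pw.end_mem_verts_toSubgraph)
  have hone : ∀ {a : V} (p : G.Walk z a), p.toSubgraph.edgeSet.ncard ≤ p.length := by
    intro a p
    have h : p.toSubgraph.edgeSet = ↑p.edges.toFinset := by
      rw [SimpleGraph.Walk.edgeSet_toSubgraph]; ext e; simp
    rw [h, Set.ncard_coe_finset]
    calc p.edges.toFinset.card ≤ p.edges.length := List.toFinset_card_le _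
      _ = p.length := p.length_edges
  have hcount : H.edgeSet.ncard ≤ G.dist z u + G.dist z v + G.dist z w := by
    have e1 := hone Pu
    have e2 := hone Pv
    have e3 := hone Pw
    have hsup : H.edgeSet.ncard ≤ Pu.toSubgraph.edgeSet.ncard +
        (Pv.toSubgraph.edgeSet.ncard + Pw.toSubgraph.edgeSet.ncard) := by
      rw [hH, SimpleGraph.Subgraph.edgeSet_sup, SimpleGraph.Subgraph.edgeSet_sup]
      exact le_trans (Set.ncard_union_le _ _)
        (Nat.add_le_add_left (Set.ncard_union_le _ _) _)
    omega
  refine le_trans (Nat.sInf_le ⟨H, hconn, hsubS, rfl⟩) hcount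

end MedianAux

/-- In a connected graph with at least three vertices, three distinct vertices `u, v, w`
have a median iff `2·d({u,v,w}) = d(u,v) + d(u,w) + d(v,w)`. -/
theorem median_iff_steiner_dist
    {V : Type*} [Fintype V] [DecidableEq V] (G : SimpleGraph V)
    (hG : G.Connected) (hV : 3 ≤ Fintype.card V)
    (u v w : V) (huv : u ≠ v) (huw : u ≠ w) (hvw : v ≠ w) :
    (∃ z : V, IsMedian G u v w z) ↔
      2 * steinerDist G {u, v, w} = G.dist u v + G.dist u w + G.dist v w := by
  classical
  have htop : (⊤ : G.Subgraph).Connected := by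
    rw [SimpleGraph.Subgraph.connected_iff']
    exact (SimpleGraph.Subgraph.topIso (G := G)).connected_iff.mpr hG
  have hne : {n | ∃ H : G.Subgraph, H.Connected ∧ ({u, v, w} : Set V) ⊆ H.verts ∧
      H.edgeSet.ncard = n}.Nonempty := ⟨_, ⊤, htop, by simp, rfl⟩
  have hmem : ∃ H : G.Subgraph, H.Connected ∧ ({u, v, w} : Set V) ⊆ H.verts ∧
      H.edgeSet.ncard = steinerDist G {u, v, w} := Nat.sInf_mem hne
  obtain ⟨H, hHc, hHsub, hHcard⟩ := hmem
  have hu' : u ∈ H.verts := hHsub (by simp)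
  have hv' : v ∈ H.verts := hHsub (by simp)
  have hw' : w ∈ H.verts := hHsub (by simp)
  haveI : Fintype ↥H.verts := Set.Finite.fintype (Set.toFinite _)
  obtain ⟨p, hp1, hp2⟩ := aux_exists_center H.coe hHc.coe ⟨u, hu'⟩ ⟨v, hv'⟩ ⟨w, hw'⟩
  have hp2' : H.coe.dist ⟨u, hu'⟩ ⟨v, hv'⟩ + H.coe.dist p ⟨w, hw'⟩ ≤
      steinerDist G {u, v, w} :=
    hp2.trans_eq ((aux_ncard_coe G H).trans hHcard)
  have d1 : G.dist u ↑p ≤ H.coe.dist ⟨u, hu'⟩ p := aux_dist_coe_le G H hHc ⟨u, hu'⟩ p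
  have d2 : G.dist ↑p v ≤ H.coe.dist p ⟨v, hv'⟩ := aux_dist_coe_le G H hHc p ⟨v, hv'⟩
  have d3 : G.dist ↑p w ≤ H.coe.dist p ⟨w, hw'⟩ := aux_dist_coe_le G H hHc p ⟨w, hw'⟩
  have d4 : G.dist v ↑p ≤ H.coe.dist ⟨v, hv'⟩ p := aux_dist_coe_le G H hHc ⟨v, hv'⟩ p
  have hcomm : H.coe.dist ⟨v, hv'⟩ p = H.coe.dist p ⟨v, hv'⟩ := SimpleGraph.dist_comm
  have t1 : G.dist u v ≤ G.dist u ↑p + G.dist ↑p v := hG.dist_triangle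
  have t2 : G.dist u w ≤ G.dist u ↑p + G.dist ↑p w := hG.dist_triangle
  have t3 : G.dist v w ≤ G.dist v ↑p + G.dist ↑p w := hG.dist_triangle
  constructor
  · rintro ⟨z₀, hm1, hm2, hm3⟩
    have hub := aux_steiner_le G hG u v w z₀
    have e1 : G.dist z₀ u = G.dist u z₀ := SimpleGraph.dist_comm
    have e2 : G.dist z₀ v = G.dist v z₀ := SimpleGraph.dist_comm
    omega
  · intro heq
    refine ⟨↑p, ?_, ?_, ?_⟩ <;> omega
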